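/- Let λ, μ ∈ ℝ satisfy μ > 0 and 3λ + 2μ > 0, and let (ω₁, ω₂) ∈ ℝ² be a unit vector. Set σ₁ = (ω₂, −ω₁, 0), σ₂ = (ω₁, ω₂, i), σ₃ = (0, 0, −(λ+3μ)/(λ+μ)). For arbitrary c₁, c₂, c₃ ∈ ℂ put a = c₁σ₁ + c₂σ₂ + c₃σ₃ and define u(t) = e^{−t}(a + i c₃ t σ₂) for t ≥ 0. Then u is bounded on [0,∞), u(0) = a, and u satisfies M₀ u'' + i M₁ u' − M₂ u = 0 on (0,∞). In particular, for every a ∈ ℂ³ there exists a bounded C^∞ solution on [0,∞) of this second-order system with initial value a. -/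

import Mathlib

set_option maxHeartbeats 1000000


open Matrix

noncomputable section

/-- Isotropic elasticity tensor `C_{ijkl} = λ δ_{ij} δ_{kl} + μ (δ_{ik} δ_{jl} + δ_{il} δ_{jk})`. -/
def isoC (lam mu : ℝ) (i j k l : Fin 3) : ℝ :=
  lam * (if i = j then (1:ℝ) else 0) * (if k = l then (1:ℝ) else 0)
    + mu * ((if i = k then (1:ℝ) else 0) * (if j = l then (1:ℝ) else 0)
      + (if i = l then (1:ℝ) else 0) * (if j = k then (1:ℝ) else 0))

/-- The matrix `⟨ξ,ζ⟩` with entries `⟨ξ,ζ⟩_{ik} = Σ_{j,l} C_{ijkl} ξ_j ζ_l`. -/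
def bil (lam mu : ℝ) (ξ ζ : Fin 3 → ℝ) : Matrix (Fin 3) (Fin 3) ℝ :=
  Matrix.of fun i k => ∑ j, ∑ l, isoC lam mu i j k l * ξ j * ζ l

/-- `M₀ = ⟨e₃,e₃⟩`. -/
def Mat0 (lam mu : ℝ) : Matrix (Fin 3) (Fin 3) ℝ := bil lam mu ![0,0,1] ![0,0,1]

/-- `M₁ = ⟨e₃,ω⟩ + ⟨ω,e₃⟩` for `ω = (ω₁,ω₂,0)`. -/
def Mat1 (lam mu ω1 ω2 : ℝ) : Matrix (Fin 3) (Fin 3) ℝ :=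
  bil lam mu ![0,0,1] ![ω1,ω2,0] + bil lam mu ![ω1,ω2,0] ![0,0,1]

/-- `M₂ = ⟨ω,ω⟩`. -/
def Mat2 (lam mu ω1 ω2 : ℝ) : Matrix (Fin 3) (Fin 3) ℝ :=
  bil lam mu ![ω1,ω2,0] ![ω1,ω2,0]

/-- `⟨e₃,ω⟩`. -/
def E3w (lam mu ω1 ω2 : ℝ) : Matrix (Fin 3) (Fin 3) ℝ := bil lam mu ![0,0,1] ![ω1,ω2,0]

/-- `⟨ω,e₃⟩`. -/
def wE3 (lam mu ω1 ω2 : ℝ) : Matrix (Fin 3) (Fin 3) ℝ := bil lam mu ![ω1,ω2,0] ![0,0,1]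

/-- The 6×6 Stroh matrix
`K⁰ = [[−M₀⁻¹⟨e₃,ω⟩, −M₀⁻¹], [M₂ − ⟨ω,e₃⟩M₀⁻¹⟨e₃,ω⟩, −⟨ω,e₃⟩M₀⁻¹]]`. -/
def Stroh (lam mu ω1 ω2 : ℝ) : Matrix (Fin 6) (Fin 6) ℝ :=
  Matrix.reindex finSumFinEquiv finSumFinEquiv
    (Matrix.fromBlocks
      (-((Mat0 lam mu)⁻¹ * E3w lam mu ω1 ω2)) (-(Mat0 lam mu)⁻¹)
      (Mat2 lam mu ω1 ω2 - wE3 lam mu ω1 ω2 * (Mat0 lam mu)⁻¹ * E3w lam mu ω1 ω2)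
      (-(wE3 lam mu ω1 ω2 * (Mat0 lam mu)⁻¹)))

/-- Complex versions (real matrices regarded as complex matrices). -/
def Mat0c (lam mu : ℝ) : Matrix (Fin 3) (Fin 3) ℂ := (Mat0 lam mu).map Complex.ofReal

def Mat1c (lam mu ω1 ω2 : ℝ) : Matrix (Fin 3) (Fin 3) ℂ := (Mat1 lam mu ω1 ω2).map Complex.ofReal

def Mat2c (lam mu ω1 ω2 : ℝ) : Matrix (Fin 3) (Fin 3) ℂ := (Mat2 lam mu ω1 ω2).map Complex.ofReal

def E3wc (lam mu ω1 ω2 : ℝ) : Matrix (Fin 3) (Fin 3) ℂ := (E3w lam mu ω1 ω2).map Complex.ofReal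

def Strohc (lam mu ω1 ω2 : ℝ) : Matrix (Fin 6) (Fin 6) ℂ := (Stroh lam mu ω1 ω2).map Complex.ofReal

end

/-- With `a = c₁σ₁ + c₂σ₂ + c₃σ₃` and `u(t) = e^{−t}(a + i c₃ t σ₂)`, the function `u` is
bounded on `[0,∞)`, `u(0) = a`, and `u` solves `M₀u'' + iM₁u' − M₂u = 0` on `(0,∞)`.
In particular, for every `a ∈ ℂ³` there is a bounded `C^∞` solution on `[0,∞)` of this
system with initial value `a`. -/
lemma Mat0c_eq (lam mu : ℝ) : Mat0c lam mu =
    !![(mu:ℂ),0,0; 0,(mu:ℂ),0; 0,0,(lam:ℂ)+2*mu] := by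
  ext i j
  fin_cases i <;> fin_cases j <;>
    simp [Mat0c, Mat0, bil, isoC, Fin.sum_univ_succ, Matrix.map_apply, Matrix.vecHead,
      Matrix.vecTail] <;> push_cast <;> ring

lemma Mat1c_eq (lam mu ω1 ω2 : ℝ) : Mat1c lam mu ω1 ω2 =
    !![0,0,((lam:ℂ)+mu)*ω1; 0,0,((lam:ℂ)+mu)*ω2; ((lam:ℂ)+mu)*ω1,((lam:ℂ)+mu)*ω2,0] := by
  ext i j
  fin_cases i <;> fin_cases j <;>
    simp [Mat1c, Mat1, bil, isoC, Fin.sum_univ_succ, Matrix.map_apply, Matrix.add_apply] <;>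
      push_cast <;> ring

lemma Mat2c_eq (lam mu ω1 ω2 : ℝ) (hω : ω1 ^ 2 + ω2 ^ 2 = 1) : Mat2c lam mu ω1 ω2 =
    !![(mu:ℂ)+((lam:ℂ)+mu)*ω1^2, ((lam:ℂ)+mu)*ω1*ω2, 0;
       ((lam:ℂ)+mu)*ω1*ω2, (mu:ℂ)+((lam:ℂ)+mu)*ω2^2, 0; 0,0,(mu:ℂ)] := by
  have hω' : (ω1:ℂ)^2 + (ω2:ℂ)^2 = 1 := by exact_mod_cast hω
  ext i j
  fin_cases i <;> fin_cases j <;>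
      simp [Mat2c, Mat2, bil, isoC, Fin.sum_univ_succ, Matrix.map_apply, Matrix.vecHead,
        Matrix.vecTail] <;> push_cast <;>
      first
        | ring1
        | linear_combination (mu:ℂ) * hω'


lemma key (lam mu ω1 ω2 : ℝ) (hlm : (lam:ℂ) + mu ≠ 0)
    (hω : ω1 ^ 2 + ω2 ^ 2 = 1) (c1 c2 c3 : ℂ) (a : Fin 3 → ℂ)
    (ha : a = c1 • (![(ω2 : ℂ), -(ω1 : ℂ), 0] : Fin 3 → ℂ)
        + c2 • (![(ω1 : ℂ), (ω2 : ℂ), Complex.I] : Fin 3 → ℂ)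
        + c3 • (![0, 0, -(((lam : ℂ) + 3 * mu) / ((lam : ℂ) + mu))] : Fin 3 → ℂ))
    (u : ℝ → Fin 3 → ℂ)
    (hu : u = fun t : ℝ => Complex.exp (-(t : ℂ)) •
        (a + (Complex.I * c3 * (t : ℂ)) • (![(ω1 : ℂ), (ω2 : ℂ), Complex.I] : Fin 3 → ℂ))) :
    ContDiff ℝ (⊤ : ℕ∞) u ∧ (∃ C : ℝ, ∀ t : ℝ, 0 ≤ t → ‖u t‖ ≤ C) ∧ u 0 = a ∧
    (∀ t : ℝ,
        Mat0c lam mu *ᵥ deriv (deriv u) t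
            + Complex.I • (Mat1c lam mu ω1 ω2 *ᵥ deriv u t)
            - Mat2c lam mu ω1 ω2 *ᵥ u t = 0) := by
  set v : Fin 3 → ℂ := ![(ω1 : ℂ), (ω2 : ℂ), Complex.I] with hv
  have hu' : u = fun t : ℝ => Complex.exp (-(t:ℂ)) • a
      + (Complex.exp (-(t:ℂ)) * (Complex.I * c3 * (t:ℂ))) • v := by
    funext t; simp [hu, smul_add, smul_smul]
  have hr : ∀ t : ℝ, HasDerivAt (fun t : ℝ => (t : ℂ)) 1 t := fun t => by
    exact (hasDerivAt_id t).ofReal_comp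
  have hf : ∀ t : ℝ, HasDerivAt (fun t : ℝ => Complex.exp (-(t:ℂ)))
      (-Complex.exp (-(t:ℂ))) t := fun t => by
    simpa using ((hr t).neg).cexp
  have hg : ∀ t : ℝ, HasDerivAt (fun t : ℝ => Complex.I * c3 * (t:ℂ)) (Complex.I * c3) t :=
    fun t => by simpa using (hr t).const_mul (Complex.I * c3)
  set u1 : ℝ → Fin 3 → ℂ := fun t => (-Complex.exp (-(t:ℂ))) • a
      + (-Complex.exp (-(t:ℂ)) * (Complex.I * c3 * (t:ℂ))
          + Complex.exp (-(t:ℂ)) * (Complex.I * c3)) • v with hu1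
  set u2 : ℝ → Fin 3 → ℂ := fun t => (Complex.exp (-(t:ℂ))) • a
      + (Complex.exp (-(t:ℂ)) * (Complex.I * c3 * (t:ℂ))
          - 2 * Complex.exp (-(t:ℂ)) * (Complex.I * c3)) • v with hu2
  have hd1 : ∀ t : ℝ, HasDerivAt u (u1 t) t := by
    intro t; rw [hu']
    exact ((hf t).smul_const a).add (((hf t).mul (hg t)).smul_const v)
  have hd2 : ∀ t : ℝ, HasDerivAt u1 (u2 t) t := by
    intro t; rw [hu1]
    have h1 := (((hf t).neg).smul_const a)
    have h2 := ((((hf t).neg).mul (hg t)).add ((hf t).mul_const (Complex.I * c3))).smul_const v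
    have := h1.add h2
    refine this.congr_deriv ?_
    simp [hu2]; ring_nf
  have hderiv : deriv u = u1 := funext fun t => (hd1 t).deriv
  have hderiv2 : ∀ t, deriv (deriv u) t = u2 t := fun t => by
    rw [hderiv]; exact (hd2 t).deriv
  refine ⟨?_, ?_, ?_, ?_⟩
  · -- smoothness
    rw [hu']
    have hc1 : ContDiff ℝ (⊤:ℕ∞) (fun t : ℝ => Complex.exp (-(t:ℂ))) := by
      have h2 : ContDiff ℝ (⊤:ℕ∞) (fun t : ℝ => -(t:ℂ)) := Complex.ofRealCLM.contDiff.neg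
      exact (Complex.contDiff_exp (𝕜 := ℝ)).comp h2
    have hc2 : ContDiff ℝ (⊤:ℕ∞) (fun t : ℝ => Complex.I * c3 * (t:ℂ)) :=
      contDiff_const.mul Complex.ofRealCLM.contDiff
    have hsa : ContDiff ℝ (⊤:ℕ∞) (fun z : ℂ => z • a) :=
      (((1 : ℂ →L[ℂ] ℂ).smulRight a).restrictScalars ℝ).contDiff
    have hsv : ContDiff ℝ (⊤:ℕ∞) (fun z : ℂ => z • v) :=
      (((1 : ℂ →L[ℂ] ℂ).smulRight v).restrictScalars ℝ).contDiff
    exact (hsa.comp hc1).add (hsv.comp (hc1.mul hc2))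
  · -- boundedness
    refine ⟨‖a‖ + ‖c3‖ * ‖v‖, fun t ht => ?_⟩
    rw [hu]
    have h1 : ‖Complex.exp (-(t:ℂ))‖ = Real.exp (-t) := by
      rw [Complex.norm_exp]; norm_num
    have h2 : ‖Complex.I * c3 * (t:ℂ)‖ = ‖c3‖ * t := by
      simp [norm_mul, Complex.norm_real, abs_of_nonneg ht]
    have h3 : ‖a + (Complex.I * c3 * (t:ℂ)) • v‖ ≤ ‖a‖ + (‖c3‖ * t) * ‖v‖ := by
      calc ‖a + (Complex.I * c3 * (t:ℂ)) • v‖ ≤ ‖a‖ + ‖(Complex.I * c3 * (t:ℂ)) • v‖ :=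
            norm_add_le _ _
        _ = ‖a‖ + (‖c3‖ * t) * ‖v‖ := by rw [norm_smul, h2]
    rw [norm_smul, h1]
    have hE : Real.exp (-t) * Real.exp t = 1 := by rw [← Real.exp_add]; simp
    have hle1 : Real.exp (-t) ≤ 1 := Real.exp_le_one_iff.mpr (by linarith)
    have htE : t + 1 ≤ Real.exp t := Real.add_one_le_exp t
    have hpos : 0 < Real.exp (-t) := Real.exp_pos _
    have het : Real.exp (-t) * t ≤ 1 := by nlinarith
    have hA : (0:ℝ) ≤ ‖a‖ := norm_nonneg _
    have hB : (0:ℝ) ≤ ‖c3‖ * ‖v‖ := mul_nonneg (norm_nonneg _) (norm_nonneg _)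
    calc Real.exp (-t) * ‖a + (Complex.I * c3 * (t:ℂ)) • v‖
        ≤ Real.exp (-t) * (‖a‖ + (‖c3‖ * t) * ‖v‖) := by
          exact mul_le_mul_of_nonneg_left h3 hpos.le
      _ ≤ ‖a‖ + ‖c3‖ * ‖v‖ := by nlinarith [norm_nonneg c3, norm_nonneg v]
  · rw [hu]; simp
  · intro t
    rw [hderiv2 t, hderiv]
    funext i
    have hω' : (ω1:ℂ)^2 + (ω2:ℂ)^2 = 1 := by exact_mod_cast hω
    have hinv : ((lam:ℂ)+(mu:ℂ)) * ((lam:ℂ)+(mu:ℂ))⁻¹ = 1 := mul_inv_cancel₀ hlm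
    rw [Mat0c_eq, Mat1c_eq, Mat2c_eq _ _ _ _ hω]
    fin_cases i
    · simp [hu1, hu2, hu', ha, hv, Matrix.mulVec, dotProduct, Fin.sum_univ_three,
        Matrix.vecHead, Matrix.vecTail]
      linear_combination ((-1:ℂ)*Complex.exp (-(t:ℂ))*(mu:ℂ)*(ω1:ℂ)*c3*(t:ℂ)*Complex.I + (-1:ℂ)*Complex.exp (-(t:ℂ))*(mu:ℂ)*(ω1:ℂ)*c2 + (-1:ℂ)*Complex.exp (-(t:ℂ))*(lam:ℂ)*(ω1:ℂ)*c3*(t:ℂ)*Complex.I + (-1:ℂ)*Complex.exp (-(t:ℂ))*(lam:ℂ)*(ω1:ℂ)*c2) * hω' + ((3:ℂ)*Complex.exp (-(t:ℂ))*(mu:ℂ)*(ω1:ℂ)*c3*Complex.I + Complex.exp (-(t:ℂ))*(lam:ℂ)*(ω1:ℂ)*c3*Complex.I) * hinv + (Complex.exp (-(t:ℂ))*(mu:ℂ)*(ω1:ℂ)*c3*Complex.I + (-1:ℂ)*Complex.exp (-(t:ℂ))*(mu:ℂ)*(ω1:ℂ)*c3*(t:ℂ)*Complex.I + (-1:ℂ)*Complex.exp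 (-(t:ℂ))*(mu:ℂ)*(ω1:ℂ)*c2 + Complex.exp (-(t:ℂ))*(lam:ℂ)*(ω1:ℂ)*c3*Complex.I + (-1:ℂ)*Complex.exp (-(t:ℂ))*(lam:ℂ)*(ω1:ℂ)*c3*(t:ℂ)*Complex.I + (-1:ℂ)*Complex.exp (-(t:ℂ))*(lam:ℂ)*(ω1:ℂ)*c2) * Complex.I_sq
    · simp [hu1, hu2, hu', ha, hv, Matrix.mulVec, dotProduct, Fin.sum_univ_three,
        Matrix.vecHead, Matrix.vecTail]
      linear_combination ((-1:ℂ)*Complex.exp (-(t:ℂ))*(mu:ℂ)*(ω2:ℂ)*c3*(t:ℂ)*Complex.I + (-1:ℂ)*Complex.exp (-(t:ℂ))*(mu:ℂ)*(ω2:ℂ)*c2 + (-1:ℂ)*Complex.exp (-(t:ℂ))*(lam:ℂ)*(ω2:ℂ)*c3*(t:ℂ)*Complex.I + (-1:ℂ)*Complex.exp (-(t:ℂ))*(lam:ℂ)*(ω2:ℂ)*c2) * hω' + ((3:ℂ)*Complex.exp (-(t:ℂ))*(mu:ℂ)*(ω2:ℂ)*c3*Complex.I + Complex.exp (-(t:ℂ))*(lam:ℂ)*(ω2:ℂ)*c3*Complex.I)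 * hinv + (Complex.exp (-(t:ℂ))*(mu:ℂ)*(ω2:ℂ)*c3*Complex.I + (-1:ℂ)*Complex.exp (-(t:ℂ))*(mu:ℂ)*(ω2:ℂ)*c3*(t:ℂ)*Complex.I + (-1:ℂ)*Complex.exp (-(t:ℂ))*(mu:ℂ)*(ω2:ℂ)*c2 + Complex.exp (-(t:ℂ))*(lam:ℂ)*(ω2:ℂ)*c3*Complex.I + (-1:ℂ)*Complex.exp (-(t:ℂ))*(lam:ℂ)*(ω2:ℂ)*c3*(t:ℂ)*Complex.I + (-1:ℂ)*Complex.exp (-(t:ℂ))*(lam:ℂ)*(ω2:ℂ)*c2) * Complex.I_sq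
    · simp [hu1, hu2, hu', ha, hv, Matrix.mulVec, dotProduct, Fin.sum_univ_three,
        Matrix.vecHead, Matrix.vecTail]
      linear_combination (Complex.exp (-(t:ℂ))*(mu:ℂ)*c3*Complex.I*Complex.I + (-1:ℂ)*Complex.exp (-(t:ℂ))*(mu:ℂ)*c3*(t:ℂ)*Complex.I*Complex.I + (-1:ℂ)*Complex.exp (-(t:ℂ))*(mu:ℂ)*c2*Complex.I + Complex.exp (-(t:ℂ))*(lam:ℂ)*c3*Complex.I*Complex.I + (-1:ℂ)*Complex.exp (-(t:ℂ))*(lam:ℂ)*c3*(t:ℂ)*Complex.I*Complex.I + (-1:ℂ)*Complex.exp (-(t:ℂ))*(lam:ℂ)*c2*Complex.I) * hω' + ((-3:ℂ)*Complex.exp (-(t:ℂ))*(mu:ℂ)*c3 + (-1:ℂ)*Complex.exp (-(t:ℂ))*(lam:ℂ)*c3) * hinv + ((-3:ℂ)*Complex.exp (-(t:ℂ))*(mu:ℂ)*c3 + (-1:ℂ)*Complex.exp (-(t:ℂ))*(lam:ℂ)*c3) * Complex.I_sq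

theorem stmt11 (lam mu ω1 ω2 : ℝ) (hmu : 0 < mu) (hconv : 0 < 3 * lam + 2 * mu)
    (hω : ω1 ^ 2 + ω2 ^ 2 = 1) (c1 c2 c3 : ℂ) (a : Fin 3 → ℂ)
    (ha : a = c1 • (![(ω2 : ℂ), -(ω1 : ℂ), 0] : Fin 3 → ℂ)
        + c2 • (![(ω1 : ℂ), (ω2 : ℂ), Complex.I] : Fin 3 → ℂ)
        + c3 • (![0, 0, -(((lam : ℂ) + 3 * mu) / ((lam : ℂ) + mu))] : Fin 3 → ℂ))
    (u : ℝ → Fin 3 → ℂ)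
    (hu : u = fun t : ℝ => Complex.exp (-(t : ℂ)) •
        (a + (Complex.I * c3 * (t : ℂ)) • (![(ω1 : ℂ), (ω2 : ℂ), Complex.I] : Fin 3 → ℂ))) :
    (∃ C : ℝ, ∀ t : ℝ, 0 ≤ t → ‖u t‖ ≤ C) ∧
      u 0 = a ∧
      (∀ t : ℝ, 0 < t →
        Mat0c lam mu *ᵥ deriv (deriv u) t
            + Complex.I • (Mat1c lam mu ω1 ω2 *ᵥ deriv u t)
            - Mat2c lam mu ω1 ω2 *ᵥ u t = 0) ∧
      ∀ b : Fin 3 → ℂ, ∃ w : ℝ → Fin 3 → ℂ,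
        ContDiffOn ℝ (⊤ : ℕ∞) w (Set.Ici (0 : ℝ)) ∧
          (∃ C : ℝ, ∀ t : ℝ, 0 ≤ t → ‖w t‖ ≤ C) ∧
          w 0 = b ∧
          ∀ t : ℝ, 0 < t →
            Mat0c lam mu *ᵥ deriv (deriv w) t
                + Complex.I • (Mat1c lam mu ω1 ω2 *ᵥ deriv w t)
                - Mat2c lam mu ω1 ω2 *ᵥ w t = 0 := by
  have hlmR : (0:ℝ) < lam + mu := by linarith
  have hlm3R : (0:ℝ) < lam + 3 * mu := by linarith
  have hlm : (lam:ℂ) + mu ≠ 0 := by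
    have : ((lam + mu : ℝ):ℂ) ≠ 0 := Complex.ofReal_ne_zero.mpr hlmR.ne'
    push_cast at this; exact this
  have hlm3 : (lam:ℂ) + 3 * mu ≠ 0 := by
    have : ((lam + 3 * mu : ℝ):ℂ) ≠ 0 := Complex.ofReal_ne_zero.mpr hlm3R.ne'
    push_cast at this; exact this
  obtain ⟨hcd, hbd, h0, hode⟩ := key lam mu ω1 ω2 hlm hω c1 c2 c3 a ha u hu
  refine ⟨hbd, h0, fun t _ => hode t, ?_⟩
  intro b
  have hω' : (ω1:ℂ)^2 + (ω2:ℂ)^2 = 1 := by exact_mod_cast hω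
  set d1 : ℂ := (ω2:ℂ) * b 0 - (ω1:ℂ) * b 1 with hd1
  set d2 : ℂ := (ω1:ℂ) * b 0 + (ω2:ℂ) * b 1 with hd2
  set d3 : ℂ := (Complex.I * d2 - b 2) * (((lam:ℂ) + mu) / ((lam:ℂ) + 3 * mu)) with hd3
  have hb : b = d1 • (![(ω2 : ℂ), -(ω1 : ℂ), 0] : Fin 3 → ℂ)
      + d2 • (![(ω1 : ℂ), (ω2 : ℂ), Complex.I] : Fin 3 → ℂ)
      + d3 • (![0, 0, -(((lam : ℂ) + 3 * mu) / ((lam : ℂ) + mu))] : Fin 3 → ℂ) := by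
    funext i
    fin_cases i
    · show b 0 = _
      simp [hd1, hd2]
      linear_combination (-(b 0)) * hω'
    · show b 1 = _
      simp [hd1, hd2]
      linear_combination (-(b 1)) * hω'
    · show b 2 = _
      simp [hd1, hd2, hd3]
      field_simp
      linear_combination (Complex.I * ((ω1:ℂ) * b 0 + (ω2:ℂ) * b 1) - b 2) * mul_inv_cancel₀ hlm3
  obtain ⟨hcd2, hbd2, h02, hode2⟩ := key lam mu ω1 ω2 hlm hω d1 d2 d3 b hb
    (fun t : ℝ => Complex.exp (-(t : ℂ)) •
      (b + (Complex.I * d3 * (t : ℂ)) • (![(ω1 : ℂ), (ω2 : ℂ), Complex.I] : Fin 3 → ℂ))) rfl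
  exact ⟨_, hcd2.contDiffOn, hbd2, h02, fun t _ => hode2 t⟩
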